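/- (Posterior consistency for the noise-free partial order model with a fully supported prior.) Let h† be a partial order on [n] = {1,…,n}, and let o_1, …, o_m ⊆ [n] each have at least 2 elements and be such that every pair of distinct i, j ∈ [n] lies in some o_k. Let π be a probability distribution on the finite set H_{[n]} of partial orders on [n] with π(h) > 0 for every h. For each k ∈ {1,…,m} let (Y_{k,j})_{j≥1} be jointly independent random lists with each Y_{k,j} uniformly distributed on L[h†[o_k]], and for N ≥ 1 define the posterior π_N(h) = π(h) ∏_{k=1}^m ∏_{j=1}^N (1_{Y_{k,j} ∈ L[h[o_k]]}/|L[h[o_k]]|) / ∑_{h' ∈ H_{[n]}} π(h') ∏_{k=1}^m ∏_{j=1}^N (1_{Y_{k,j} ∈ L[h'[o_k]]}/|L[h'[o_k]]|). Then π_N(h†) → 1 almost surely as N → ∞. -/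

import Mathlib

open MeasureTheory ProbabilityTheory Filter

/-- A (strict) partial order on `V`: an irreflexive transitive binary relation. -/
def IsPartialOrderOn {V : Type*} (r : V → V → Prop) : Prop :=
  (∀ a, ¬ r a a) ∧ (∀ a b c, r a b → r b c → r a c)

/-- `l` is a linear extension of the suborder `h[o]` of the partial order `r`:
it enumerates `o` without repetition and for `a < b` it is not the case
that `l_b ≻ l_a`. -/
def IsLinextOn {V : Type*} (r : V → V → Prop) (o : Set V) (l : List V) : Prop :=
  l.Nodup ∧ (∀ v : V, v ∈ l ↔ v ∈ o) ∧
    ∀ a b : Fin l.length, a < b → ¬ r (l.get b) (l.get a)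

/-- A Boolean-encoded relation on `Fin n`, viewed as a `Prop`-valued relation
(so that relations on `[n]` form a finite type). -/
def relOf {n : ℕ} (r : Fin n → Fin n → Bool) : Fin n → Fin n → Prop :=
  fun i j => r i j = true

/-- Existence of a linear extension of a partial order on a finite set. -/
lemma exists_linext {n : ℕ} (r : Fin n → Fin n → Prop) (hr : IsPartialOrderOn r)
    (o : Set (Fin n)) : ∃ l, IsLinextOn r o l := by
  classical
  obtain ⟨hirr, htr⟩ := hr
  set r1 : Fin n → Fin n → Prop := fun a b => r a b ∨ a = b with hr1
  haveI : IsPartialOrder (Fin n) r1 :=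
    { refl := fun a => Or.inr rfl
      trans := by
        rintro a b c (hab | rfl) (hbc | rfl)
        · exact Or.inl (htr _ _ _ hab hbc)
        · exact Or.inl hab
        · exact Or.inl hbc
        · exact Or.inr rfl
      antisymm := by
        rintro a b (hab | rfl) (hba | h)
        · exact absurd (htr _ _ _ hab hba) (hirr a)
        · exact h.symm
        · rfl
        · rfl }
  obtain ⟨s, hs, hrs⟩ := extend_partialOrder r1
  haveI : IsLinearOrder (Fin n) s := hs
  haveI : DecidableRel s := Classical.decRel s
  set F := (Set.toFinite o).toFinset with hF
  refine ⟨Finset.sort F s, Finset.sort_nodup F s, ?_, ?_⟩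
  · intro v
    rw [Finset.mem_sort, hF, Set.Finite.mem_toFinset]
  · intro a b hab hba
    have hsortd := Finset.pairwise_sort F s
    have h1 : s ((Finset.sort F s).get a) ((Finset.sort F s).get b) :=
      hsortd.rel_get_of_lt hab
    have h2 : s ((Finset.sort F s).get b) ((Finset.sort F s).get a) :=
      hrs _ _ (Or.inl hba)
    have heq := antisymm h2 h1
    rw [heq] at hba
    exact hirr _ hba

/-- A linear extension of `r` on `o` placing `j` before `i`, when `¬ r i j`. -/
lemma exists_linext_sep {n : ℕ} (r : Fin n → Fin n → Prop) (hr : IsPartialOrderOn r)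
    (o : Set (Fin n)) (i j : Fin n) (hij : i ≠ j) (hrij : ¬ r i j)
    (hi : i ∈ o) (hj : j ∈ o) :
    ∃ l, IsLinextOn r o l ∧ ∃ a b : Fin l.length, a < b ∧ l.get a = j ∧ l.get b = i := by
  obtain ⟨hirr, htr⟩ := hr
  set r' : Fin n → Fin n → Prop :=
    fun a b => r a b ∨ ((r a j ∨ a = j) ∧ (r i b ∨ i = b)) with hr'
  have hpo' : IsPartialOrderOn r' := by
    constructor
    · rintro a (ha | ⟨(haj | rfl), (hia | rfl)⟩)
      · exact hirr a ha
      · exact hrij (htr _ _ _ hia haj)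
      · exact hrij haj
      · exact hrij hia
      · exact hij rfl
    · rintro a b c (hab | ⟨hl, hr2⟩) (hbc | ⟨hl2, hr3⟩)
      · exact Or.inl (htr _ _ _ hab hbc)
      · refine Or.inr ⟨?_, hr3⟩
        rcases hl2 with hbj | rfl
        · exact Or.inl (htr _ _ _ hab hbj)
        · exact Or.inl hab
      · refine Or.inr ⟨hl, ?_⟩
        rcases hr2 with hib | rfl
        · exact Or.inl (htr _ _ _ hib hbc)
        · exact Or.inl hbc
      · exfalso
        rcases hr2 with hib | rfl <;> rcases hl2 with hbj | rfl
        · exact hrij (htr _ _ _ hib hbj)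
        · exact hrij hib
        · exact hrij hbj
        · exact hij rfl
  obtain ⟨l, hnd, hmem, hord⟩ := exists_linext r' hpo' o
  have hlin : IsLinextOn r o l :=
    ⟨hnd, hmem, fun a b hab hba => hord a b hab (Or.inl hba)⟩
  obtain ⟨a, ha⟩ := List.mem_iff_get.1 ((hmem j).2 hj)
  obtain ⟨b, hb⟩ := List.mem_iff_get.1 ((hmem i).2 hi)
  have hab : a ≠ b := by
    rintro rfl; rw [ha] at hb; exact hij hb.symm
  have hr'ji : r' j i := Or.inr ⟨Or.inr rfl, Or.inr rfl⟩
  rcases lt_or_gt_of_ne hab with h | h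
  · exact ⟨l, hlin, a, b, h, ha, hb⟩
  · exfalso
    exact hord b a h (by rw [ha, hb]; exact hr'ji)

/-- Finiteness of the set of linear extensions. -/
lemma linext_finite {n : ℕ} (r : Fin n → Fin n → Prop) (o : Set (Fin n)) :
    {l : List (Fin n) | IsLinextOn r o l}.Finite := by
  apply Set.Finite.subset (List.finite_length_le (Fin n) n)
  intro l hl
  simpa using hl.1.length_le_card

lemma linext_nonempty {n : ℕ} (r : Fin n → Fin n → Prop) (hr : IsPartialOrderOn r)
    (o : Set (Fin n)) : {l : List (Fin n) | IsLinextOn r o l}.Nonempty :=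
  exists_linext r hr o

/-- In the noise-free model, if every true linext set is contained in that of `h`,
and `h ≠ htrue`, then some containment is strict. -/
lemma caseB_strict {n m : ℕ} (htrue h : Fin n → Fin n → Bool)
    (h1 : IsPartialOrderOn (relOf htrue)) (h2 : IsPartialOrderOn (relOf h))
    (hne : h ≠ htrue) (o : Fin m → Set (Fin n))
    (hcover : ∀ i j : Fin n, i ≠ j → ∃ k, i ∈ o k ∧ j ∈ o k)
    (hsub : ∀ k, {l : List (Fin n) | IsLinextOn (relOf htrue) (o k) l} ⊆
      {l : List (Fin n) | IsLinextOn (relOf h) (o k) l}) :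
    ∃ k, {l : List (Fin n) | IsLinextOn (relOf htrue) (o k) l} ⊂
      {l : List (Fin n) | IsLinextOn (relOf h) (o k) l} := by
  -- step (a): h ⊆ htrue
  have hsub2 : ∀ i j, relOf h i j → relOf htrue i j := by
    intro i j hij
    have hne' : i ≠ j := by rintro rfl; exact h2.1 i hij
    by_contra hnt
    obtain ⟨k, hik, hjk⟩ := hcover i j hne'
    obtain ⟨l, hl, a, b, hab, ha, hb⟩ :=
      exists_linext_sep (relOf htrue) h1 (o k) i j hne' hnt hik hjk
    have hlh : IsLinextOn (relOf h) (o k) l := hsub k hl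
    exact hlh.2.2 a b hab (by rw [ha, hb]; exact hij)
  -- step (b): find i j with htrue i j and ¬ h i j
  have hdiff : ∃ i j, relOf htrue i j ∧ ¬ relOf h i j := by
    by_contra hc
    push_neg at hc
    apply hne
    funext i j
    rcases Bool.eq_false_or_eq_true (h i j) with hh | hh <;>
      rcases Bool.eq_false_or_eq_true (htrue i j) with ht | ht
    · rw [hh, ht]
    · exact absurd (hsub2 i j (by simpa [relOf] using hh)) (by simp [relOf, ht])
    · exact absurd (hc i j (by simpa [relOf] using ht)) (by simp [relOf, hh])

    · rw [hh, ht]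
  obtain ⟨i, j, hti, hhi⟩ := hdiff
  have hne' : i ≠ j := by rintro rfl; exact h1.1 i hti
  obtain ⟨k, hik, hjk⟩ := hcover i j hne'
  obtain ⟨l, hl, a, b, hab, ha, hb⟩ :=
    exists_linext_sep (relOf h) h2 (o k) i j hne' hhi hik hjk
  refine ⟨k, hsub k, fun hcon => ?_⟩
  have : IsLinextOn (relOf htrue) (o k) l := hcon hl
  exact this.2.2 a b hab (by rw [ha, hb]; exact hti)

/-- Almost surely, a random variable with law `uniformOn S` lands in `S`. -/
lemma as_mem_support {Ω : Type*} [MeasurableSpace Ω] (μ : Measure Ω)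
    {E : Type*} [MeasurableSpace E] [MeasurableSingletonClass E] [Countable E]
    (X : Ω → E) (hX : Measurable X) (S : Set E) (hS : S.Finite)
    (hdist : Measure.map X μ = uniformOn S) :
    ∀ᵐ ω ∂μ, X ω ∈ S := by
  have hmS : MeasurableSet Sᶜ := (Set.to_countable Sᶜ).measurableSet
  have : μ (X ⁻¹' Sᶜ) = 0 := by
    rw [← Measure.map_apply hX hmS, hdist]
    rw [uniformOn_eq_zero_iff hS]
    simp
  rw [ae_iff]
  exact this

/-- Almost surely some coordinate escapes a set `T` that misses part of the support. -/
lemma as_exists_escape {Ω : Type*} [MeasurableSpace Ω] (μ : Measure Ω) [IsProbabilityMeasure μ]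
    {E : Type*} [mE : MeasurableSpace E] [MeasurableSingletonClass E] [Countable E]
    {ι : Type*} (Y : ι → Ω → E) (hmeas : ∀ p, Measurable (Y p))
    (g : ℕ → ι) (hg : Function.Injective g)
    (hindep : iIndepFun Y μ)
    (S T : Set E) (hS : S.Finite)
    (hdist : ∀ j, Measure.map (Y (g j)) μ = uniformOn S)
    (l0 : E) (hl0S : l0 ∈ S) (hl0T : l0 ∉ T) :
    ∀ᵐ ω ∂μ, ∃ j : ℕ, Y (g j) ω ∉ T := by
  have hSne : S.Nonempty := ⟨l0, hl0S⟩
  have hTm : MeasurableSet T := (Set.to_countable T).measurableSet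
  set p := uniformOn S T with hp
  have hpre : ∀ j, μ (Y (g j) ⁻¹' T) = p := by
    intro j
    rw [← Measure.map_apply (hmeas _) hTm, hdist j]
  have hq : uniformOn S Tᶜ ≠ 0 := by
    rw [Ne, uniformOn_eq_zero_iff hS, Set.eq_empty_iff_forall_notMem]
    push_neg
    exact ⟨l0, hl0S, hl0T⟩
  have hp1 : p < 1 := by
    have hc := uniformOn_compl T hS hSne
    haveI := uniformOn_isProbabilityMeasure hS hSne
    refine lt_of_le_of_ne prob_le_one (fun hpeq => hq ?_)
    rw [← hp, hpeq] at hc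
    calc uniformOn S Tᶜ = 1 + uniformOn S Tᶜ - 1 := by
          rw [ENNReal.add_sub_cancel_left (by simp)]
      _ = 0 := by rw [hc]; simp
  have hpow : ∀ J : ℕ, μ (⋂ j ∈ Finset.range J, Y (g j) ⁻¹' T) = p ^ J := by
    intro J
    have := hindep.measure_inter_preimage_eq_mul
      ((Finset.range J).map ⟨g, hg⟩) (sets := fun _ => T) (fun i _ => hTm)
    have hset : (⋂ i ∈ (Finset.range J).map ⟨g, hg⟩, Y i ⁻¹' T)
        = ⋂ j ∈ Finset.range J, Y (g j) ⁻¹' T := by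
      ext ω
      constructor
      · intro hh
        simp only [Set.mem_iInter] at hh ⊢
        intro j hj
        exact hh (g j) (Finset.mem_map_of_mem _ hj)
      · intro hh
        simp only [Set.mem_iInter, Finset.mem_map, Function.Embedding.coeFn_mk] at hh ⊢
        rintro i ⟨j, hj, rfl⟩
        exact hh j hj
    rw [hset] at this
    rw [this, Finset.prod_map]
    simp only [Function.Embedding.coeFn_mk, hpre]
    rw [Finset.prod_const, Finset.card_range]
  have hC : μ (⋂ j : ℕ, Y (g j) ⁻¹' T) = 0 := by
    refine le_antisymm ?_ (zero_le (a := _))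
    refine ge_of_tendsto' (ENNReal.tendsto_pow_atTop_nhds_zero_of_lt_one hp1) (fun J => ?_)
    rw [← hpow J]
    exact measure_mono (fun ω hω => by
      simp only [Set.mem_iInter] at hω ⊢
      intro j _
      exact hω j)
  rw [ae_iff]
  convert hC using 2
  ext ω
  simp

lemma ratio_tendsto_one {H : Type*} (F : Finset H) (h0 : H) (h0F : h0 ∈ F)
    (π : H → ℝ) (hπ0 : 0 < π h0)
    (P : H → ℕ → ℝ) (t : ℝ) (ht : 0 < t)
    (hP0 : ∀ N, P h0 N = t ^ N)
    (hother : ∀ h ∈ F, h ≠ h0 → Tendsto (fun N => P h N / t ^ N) atTop (nhds 0)) :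
    Tendsto (fun N => (π h0 * P h0 N) / ∑ h ∈ F, π h * P h N) atTop (nhds 1) := by
  classical
  have htN : ∀ N : ℕ, (t : ℝ) ^ N ≠ 0 := fun N => (pow_pos ht N).ne'
  have key : ∀ N, (π h0 * P h0 N) / ∑ h ∈ F, π h * P h N
      = π h0 / ∑ h ∈ F, π h * (P h N / t ^ N) := by
    intro N
    have hs : ∑ h ∈ F, π h * (P h N / t ^ N) = (∑ h ∈ F, π h * P h N) / t ^ N := by
      rw [Finset.sum_div]
      exact Finset.sum_congr rfl (fun h _ => (mul_div_assoc _ _ _).symm)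
    rw [hs, div_div_eq_mul_div, hP0 N]
  have hsum : Tendsto (fun N => ∑ h ∈ F, π h * (P h N / t ^ N)) atTop (nhds (π h0)) := by
    have hlim : Tendsto (fun N => ∑ h ∈ F, π h * (P h N / t ^ N)) atTop
        (nhds (∑ h ∈ F, if h = h0 then π h0 else 0)) := by
      refine tendsto_finset_sum _ (fun h hF => ?_)
      by_cases hh : h = h0
      · subst hh
        simp only [if_pos rfl]
        have : ∀ N, π h * (P h N / t ^ N) = π h := by
          intro N; rw [hP0 N, div_self (htN N), mul_one]
        simpa [this] using tendsto_const_nhds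
      · simp only [if_neg hh]
        simpa using (hother h hF hh).const_mul (π h)
    have : (∑ h ∈ F, if h = h0 then π h0 else 0) = π h0 := by
      rw [Finset.sum_ite_eq' F h0 (fun _ => π h0)]
      simp [h0F]
    rwa [this] at hlim
  have hfin : Tendsto (fun N => π h0 / ∑ h ∈ F, π h * (P h N / t ^ N)) atTop
      (nhds (π h0 / π h0)) := tendsto_const_nhds.div hsum hπ0.ne'
  rw [div_self hπ0.ne'] at hfin
  exact hfin.congr (fun N => (key N).symm)


open Classical in
theorem posterior_consistency_noise_free
    (n : ℕ) (hn : 1 ≤ n) (m : ℕ) (o : Fin m → Set (Fin n))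
    (hsize : ∀ k, 2 ≤ (o k).ncard)
    (hcover : ∀ i j : Fin n, i ≠ j → ∃ k, i ∈ o k ∧ j ∈ o k)
    (htrue : Fin n → Fin n → Bool) (hpo : IsPartialOrderOn (relOf htrue))
    (π : (Fin n → Fin n → Bool) → ℝ)
    (hπpos : ∀ h, IsPartialOrderOn (relOf h) → 0 < π h)
    (hπsum : ∑ h ∈ Finset.univ.filter (fun h => IsPartialOrderOn (relOf h)), π h = 1)
    {Ω : Type*} [MeasurableSpace Ω] (μ : Measure Ω) [IsProbabilityMeasure μ]
    [MeasurableSpace (List (Fin n))] [MeasurableSingletonClass (List (Fin n))]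
    (Y : Fin m × ℕ → Ω → List (Fin n))
    (hmeas : ∀ p, Measurable (Y p))
    (hindep : iIndepFun Y μ)
    (hdist : ∀ k j, Measure.map (Y (k, j)) μ =
      uniformOn {l : List (Fin n) | IsLinextOn (relOf htrue) (o k) l}) :
    ∀ᵐ ω ∂μ, Tendsto (fun N : ℕ =>
        (π htrue * ∏ k : Fin m, ∏ j ∈ Finset.range N,
            ((if IsLinextOn (relOf htrue) (o k) (Y (k, j) ω) then (1:ℝ) else 0) /
              ({l : List (Fin n) | IsLinextOn (relOf htrue) (o k) l}.ncard : ℝ))) /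
          (∑ h' ∈ Finset.univ.filter (fun h => IsPartialOrderOn (relOf h)),
            π h' * ∏ k : Fin m, ∏ j ∈ Finset.range N,
              ((if IsLinextOn (relOf h') (o k) (Y (k, j) ω) then (1:ℝ) else 0) /
                ({l : List (Fin n) | IsLinextOn (relOf h') (o k) l}.ncard : ℝ))))
      atTop (nhds 1) := by
  classical
  have hSfin : ∀ (h : Fin n → Fin n → Bool) (k : Fin m),
      {l : List (Fin n) | IsLinextOn (relOf h) (o k) l}.Finite := fun h k => linext_finite _ _
  -- the almost sure events
  have hE0 : ∀ᵐ ω ∂μ, ∀ p : Fin m × ℕ,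
      IsLinextOn (relOf htrue) (o p.1) (Y p ω) := by
    rw [ae_all_iff]
    rintro ⟨k, j⟩
    exact as_mem_support μ (Y (k, j)) (hmeas _) _ (hSfin htrue k) (hdist k j)
  have hE1 : ∀ᵐ ω ∂μ, ∀ (h : Fin n → Fin n → Bool) (k : Fin m) (l0 : List (Fin n)),
      IsLinextOn (relOf htrue) (o k) l0 → ¬ IsLinextOn (relOf h) (o k) l0 →
      ∃ j : ℕ, ¬ IsLinextOn (relOf h) (o k) (Y (k, j) ω) := by
    rw [ae_all_iff]; intro h
    rw [ae_all_iff]; intro k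
    rw [ae_all_iff]; intro l0
    by_cases hcc : IsLinextOn (relOf htrue) (o k) l0 ∧ ¬ IsLinextOn (relOf h) (o k) l0
    · have hesc := as_exists_escape μ Y hmeas (fun j => (k, j))
        (fun a b hab => (Prod.mk.injEq _ _ _ _ ▸ hab : (k, a) = (k, b)) |>
          fun h' => by injection h')
        hindep {l : List (Fin n) | IsLinextOn (relOf htrue) (o k) l}
        {l : List (Fin n) | IsLinextOn (relOf h) (o k) l}
        (hSfin htrue k) (fun j => hdist k j) l0 hcc.1 hcc.2
      filter_upwards [hesc] with ω hω _ _
      exact hω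
    · exact ae_of_all _ (fun ω h1 h2 => absurd ⟨h1, h2⟩ hcc)
  filter_upwards [hE0, hE1] with ω hω0 hω1
  -- abbreviations (pointwise, ω fixed)
  have hcpos : ∀ h : Fin n → Fin n → Bool, IsPartialOrderOn (relOf h) → ∀ k : Fin m,
      0 < (({l : List (Fin n) | IsLinextOn (relOf h) (o k) l}).ncard : ℝ) := by
    intro h hh k
    have : 0 < ({l : List (Fin n) | IsLinextOn (relOf h) (o k) l}).ncard :=
      (Set.ncard_pos (hSfin h k)).2 (exists_linext _ hh _)
    exact_mod_cast this
  set t : ℝ := ∏ k : Fin m,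
      (1 / (({l : List (Fin n) | IsLinextOn (relOf htrue) (o k) l}).ncard : ℝ)) with hT
  have ht : 0 < t :=
    Finset.prod_pos (fun k _ => one_div_pos.2 (hcpos htrue hpo k))
  refine ratio_tendsto_one _ htrue (Finset.mem_filter.2 ⟨Finset.mem_univ _, hpo⟩) π
    (hπpos _ hpo)
    (fun h N => ∏ k : Fin m, ∏ j ∈ Finset.range N,
      ((if IsLinextOn (relOf h) (o k) (Y (k, j) ω) then (1:ℝ) else 0) /
        (({l : List (Fin n) | IsLinextOn (relOf h) (o k) l}).ncard : ℝ)))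
    t ht ?_ ?_
  · -- the true partial order has all indicators equal to 1
    intro N
    show (∏ k : Fin m, ∏ j ∈ Finset.range N,
      ((if IsLinextOn (relOf htrue) (o k) (Y (k, j) ω) then (1:ℝ) else 0) /
        (({l : List (Fin n) | IsLinextOn (relOf htrue) (o k) l}).ncard : ℝ))) = t ^ N
    have hkk : ∀ k : Fin m, ∏ j ∈ Finset.range N,
        ((if IsLinextOn (relOf htrue) (o k) (Y (k, j) ω) then (1:ℝ) else 0) /
          (({l : List (Fin n) | IsLinextOn (relOf htrue) (o k) l}).ncard : ℝ))
        = (1 / (({l : List (Fin n) | IsLinextOn (relOf htrue) (o k) l}).ncard : ℝ)) ^ N := by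
      intro k
      rw [Finset.prod_congr rfl (fun j _ => by rw [if_pos (hω0 (k, j))]),
        Finset.prod_const, Finset.card_range]
    rw [Finset.prod_congr rfl (fun k _ => hkk k), Finset.prod_pow, hT]
  · -- other partial orders are asymptotically negligible
    intro h hF hne
    have hpoh : IsPartialOrderOn (relOf h) := (Finset.mem_filter.1 hF).2
    by_cases hsub : ∀ k, {l : List (Fin n) | IsLinextOn (relOf htrue) (o k) l} ⊆
        {l : List (Fin n) | IsLinextOn (relOf h) (o k) l}
    · -- case B : all supports contained, some strictly
      obtain ⟨k0, hk0⟩ := caseB_strict htrue h hpo hpoh hne o hcover hsub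
      set s : ℝ := ∏ k : Fin m,
          (1 / (({l : List (Fin n) | IsLinextOn (relOf h) (o k) l}).ncard : ℝ)) with hsdef
      have hspos : 0 < s :=
        Finset.prod_pos (fun k _ => one_div_pos.2 (hcpos h hpoh k))
      have hPB : ∀ N, (∏ k : Fin m, ∏ j ∈ Finset.range N,
          ((if IsLinextOn (relOf h) (o k) (Y (k, j) ω) then (1:ℝ) else 0) /
            (({l : List (Fin n) | IsLinextOn (relOf h) (o k) l}).ncard : ℝ))) = s ^ N := by
        intro N
        have hkk : ∀ k : Fin m, ∏ j ∈ Finset.range N,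
            ((if IsLinextOn (relOf h) (o k) (Y (k, j) ω) then (1:ℝ) else 0) /
              (({l : List (Fin n) | IsLinextOn (relOf h) (o k) l}).ncard : ℝ))
            = (1 / (({l : List (Fin n) | IsLinextOn (relOf h) (o k) l}).ncard : ℝ)) ^ N := by
          intro k
          rw [Finset.prod_congr rfl (fun j _ => by rw [if_pos (show IsLinextOn (relOf h) (o k) (Y (k, j) ω) from hsub k (hω0 (k, j)))]),
            Finset.prod_const, Finset.card_range]
        rw [Finset.prod_congr rfl (fun k _ => hkk k), Finset.prod_pow]
      have hslt : s < t := by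
        refine Finset.prod_lt_prod (fun k _ => one_div_pos.2 (hcpos h hpoh k))
          (fun k _ => ?_) ⟨k0, Finset.mem_univ _, ?_⟩
        · refine one_div_le_one_div_of_le (hcpos htrue hpo k) ?_
          exact_mod_cast Set.ncard_le_ncard (hsub k) (hSfin h k)
        · refine one_div_lt_one_div_of_lt (hcpos htrue hpo k0) ?_
          exact_mod_cast Set.ncard_lt_ncard hk0 (hSfin h k0)
      have heq : ∀ N : ℕ, (∏ k : Fin m, ∏ j ∈ Finset.range N,
          ((if IsLinextOn (relOf h) (o k) (Y (k, j) ω) then (1:ℝ) else 0) /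
            (({l : List (Fin n) | IsLinextOn (relOf h) (o k) l}).ncard : ℝ))) / t ^ N
          = (s / t) ^ N := by
        intro N
        rw [hPB N, div_pow]
      refine Tendsto.congr (fun N => (heq N).symm) ?_
      exact tendsto_pow_atTop_nhds_zero_of_lt_one (le_of_lt (div_pos hspos ht))
        ((div_lt_one ht).2 hslt)
    · -- case A : the product eventually hits a zero indicator
      push_neg at hsub
      obtain ⟨k0, hk0⟩ := hsub
      obtain ⟨l0, hl0S, hl0T⟩ := Set.not_subset.1 hk0
      obtain ⟨j0, hj0⟩ := hω1 h k0 l0 hl0S hl0T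
      refine tendsto_const_nhds.congr' ?_
      filter_upwards [eventually_ge_atTop (j0 + 1)] with N hN
      have hz : ∏ j ∈ Finset.range N,
          ((if IsLinextOn (relOf h) (o k0) (Y (k0, j) ω) then (1:ℝ) else 0) /
            (({l : List (Fin n) | IsLinextOn (relOf h) (o k0) l}).ncard : ℝ)) = 0 := by
        refine Finset.prod_eq_zero (i := j0) (Finset.mem_range.2 (by omega)) ?_
        rw [if_neg hj0, zero_div]
      rw [Finset.prod_eq_zero (Finset.mem_univ k0) hz, zero_div]
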